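/- Let α_{ij} = α_{ji} ∈ (0, π/2] for all unordered pairs {i,j} ⊂ {1,2,3,4}, and let M be the 4×4 symmetric matrix with diagonal entries 1 and M_{ij} = −cos α_{ij} for i ≠ j. Suppose for each pair {j,k} ⊂ {1,2,3} the quantity (cos α_{jk} + cos α_{j4}·cos α_{k4})/(sin α_{j4}·sin α_{k4}) lies in [−1, 1], and let β₁ = arccos((cos α_{23} + cos α_{24} cos α_{34})/(sin α_{24} sin α_{34})), β₂ = arccos((cos α_{13} + cos α_{14} cos α_{34})/(sin α_{14} sin α_{34})), β₃ = arccos((cos α_{12} + cos α_{14} cos α_{24})/(sin α_{14} sin α_{24})) be the face angles of face 4. Then det M = −4·(1 − cos²α_{14})·(1 − cos²α_{24})·(1 − cos²α_{34})·cos((β₁+β₂+β₃)/2)·cos((β₁−β₂+β₃)/2)·cos((β₁+β₂−β₃)/2)·cos((−β₁+β₂+β₃)/2). -/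

import Mathlib

open Real

theorem det_gram_eq_face_angle_product
    (a12 a13 a14 a23 a24 a34 : ℝ)
    (h23 : (Real.cos a23 + Real.cos a24 * Real.cos a34) /
        (Real.sin a24 * Real.sin a34) ∈ Set.Icc (-1 : ℝ) 1)
    (h13 : (Real.cos a13 + Real.cos a14 * Real.cos a34) /
        (Real.sin a14 * Real.sin a34) ∈ Set.Icc (-1 : ℝ) 1)
    (h12 : (Real.cos a12 + Real.cos a14 * Real.cos a24) /
        (Real.sin a14 * Real.sin a24) ∈ Set.Icc (-1 : ℝ) 1)
    (h14 : a14 ∈ Set.Ioc 0 (π / 2)) (h24 : a24 ∈ Set.Ioc 0 (π / 2))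
    (h34 : a34 ∈ Set.Ioc 0 (π / 2))
    (h12' : a12 ∈ Set.Ioc 0 (π / 2)) (h13' : a13 ∈ Set.Ioc 0 (π / 2))
    (h23' : a23 ∈ Set.Ioc 0 (π / 2))
    (β₁ β₂ β₃ : ℝ)
    (hβ₁ : β₁ = Real.arccos ((Real.cos a23 + Real.cos a24 * Real.cos a34) /
        (Real.sin a24 * Real.sin a34)))
    (hβ₂ : β₂ = Real.arccos ((Real.cos a13 + Real.cos a14 * Real.cos a34) /
        (Real.sin a14 * Real.sin a34)))
    (hβ₃ : β₃ = Real.arccos ((Real.cos a12 + Real.cos a14 * Real.cos a24) /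
        (Real.sin a14 * Real.sin a24))) :
    (!![1, -Real.cos a12, -Real.cos a13, -Real.cos a14;
        -Real.cos a12, 1, -Real.cos a23, -Real.cos a24;
        -Real.cos a13, -Real.cos a23, 1, -Real.cos a34;
        -Real.cos a14, -Real.cos a24, -Real.cos a34, 1] :
      Matrix (Fin 4) (Fin 4) ℝ).det =
    -4 * (1 - Real.cos a14 ^ 2) * (1 - Real.cos a24 ^ 2) * (1 - Real.cos a34 ^ 2) *
      Real.cos ((β₁ + β₂ + β₃) / 2) * Real.cos ((β₁ - β₂ + β₃) / 2) *
      Real.cos ((β₁ + β₂ - β₃) / 2) * Real.cos ((-β₁ + β₂ + β₃) / 2) := by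
  have hpi : π / 2 < π := by linarith [Real.pi_pos]
  have s14 : 0 < Real.sin a14 := Real.sin_pos_of_pos_of_lt_pi h14.1 (lt_of_le_of_lt h14.2 hpi)
  have s24 : 0 < Real.sin a24 := Real.sin_pos_of_pos_of_lt_pi h24.1 (lt_of_le_of_lt h24.2 hpi)
  have s34 : 0 < Real.sin a34 := Real.sin_pos_of_pos_of_lt_pi h34.1 (lt_of_le_of_lt h34.2 hpi)
  have hc1 : Real.cos β₁ = (Real.cos a23 + Real.cos a24 * Real.cos a34) /
      (Real.sin a24 * Real.sin a34) := by
    rw [hβ₁]; exact Real.cos_arccos h23.1 h23.2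
  have hc2 : Real.cos β₂ = (Real.cos a13 + Real.cos a14 * Real.cos a34) /
      (Real.sin a14 * Real.sin a34) := by
    rw [hβ₂]; exact Real.cos_arccos h13.1 h13.2
  have hc3 : Real.cos β₃ = (Real.cos a12 + Real.cos a14 * Real.cos a24) /
      (Real.sin a14 * Real.sin a24) := by
    rw [hβ₃]; exact Real.cos_arccos h12.1 h12.2
  -- multiplied-out forms
  have hq1 : Real.cos β₁ * (Real.sin a24 * Real.sin a34)
      = Real.cos a23 + Real.cos a24 * Real.cos a34 := by
    rw [hc1]; field_simp
  have hq2 : Real.cos β₂ * (Real.sin a14 * Real.sin a34)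
      = Real.cos a13 + Real.cos a14 * Real.cos a34 := by
    rw [hc2]; field_simp
  have hq3 : Real.cos β₃ * (Real.sin a14 * Real.sin a24)
      = Real.cos a12 + Real.cos a14 * Real.cos a24 := by
    rw [hc3]; field_simp
  have e14 := Real.sin_sq a14
  have e24 := Real.sin_sq a24
  have e34 := Real.sin_sq a34
  -- product-of-four-cosines identity
  have p1 : Real.cos ((β₁ + β₂ + β₃) / 2) * Real.cos ((β₁ - β₂ + β₃) / 2)
      = (Real.cos (β₁ + β₃) + Real.cos β₂) / 2 := by
    have h := Real.cos_add_cos (β₁ + β₃) β₂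
    have e1 : (β₁ + β₃ + β₂) / 2 = (β₁ + β₂ + β₃) / 2 := by ring
    have e2 : (β₁ + β₃ - β₂) / 2 = (β₁ - β₂ + β₃) / 2 := by ring
    rw [e1, e2] at h; linarith
  have p2 : Real.cos ((β₁ + β₂ - β₃) / 2) * Real.cos ((-β₁ + β₂ + β₃) / 2)
      = (Real.cos β₂ + Real.cos (β₁ - β₃)) / 2 := by
    have h := Real.cos_add_cos β₂ (β₁ - β₃)
    have e1 : (β₂ + (β₁ - β₃)) / 2 = (β₁ + β₂ - β₃) / 2 := by ring
    have e2 : (β₂ - (β₁ - β₃)) / 2 = (-β₁ + β₂ + β₃) / 2 := by ring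
    rw [e1, e2] at h; linarith
  have prod4 : Real.cos ((β₁ + β₂ + β₃) / 2) * Real.cos ((β₁ - β₂ + β₃) / 2) *
      Real.cos ((β₁ + β₂ - β₃) / 2) * Real.cos ((-β₁ + β₂ + β₃) / 2)
      = (Real.cos β₁ ^ 2 + Real.cos β₂ ^ 2 + Real.cos β₃ ^ 2 - 1
          + 2 * Real.cos β₁ * Real.cos β₂ * Real.cos β₃) / 4 := by
    have key : Real.cos ((β₁ + β₂ + β₃) / 2) * Real.cos ((β₁ - β₂ + β₃) / 2) *
        Real.cos ((β₁ + β₂ - β₃) / 2) * Real.cos ((-β₁ + β₂ + β₃) / 2)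
        = ((Real.cos (β₁ + β₃) + Real.cos β₂) / 2) *
          ((Real.cos β₂ + Real.cos (β₁ - β₃)) / 2) := by
      rw [← p1, ← p2]; ring
    rw [key, Real.cos_add, Real.cos_sub]
    have hs1 := Real.sin_sq β₁
    have hs3 := Real.sin_sq β₃
    linear_combination (-(1/4) * Real.sin β₃ ^ 2) * hs1 +
      (-(1/4) * (1 - Real.cos β₁ ^ 2)) * hs3
  -- squares of face-angle cosines, cleared of denominators
  have hc1sq : (1 - Real.cos a24 ^ 2) * (1 - Real.cos a34 ^ 2) * Real.cos β₁ ^ 2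
      = (Real.cos a23 + Real.cos a24 * Real.cos a34) ^ 2 := by
    rw [← e24, ← e34]
    linear_combination (Real.cos β₁ * (Real.sin a24 * Real.sin a34) +
      (Real.cos a23 + Real.cos a24 * Real.cos a34)) * hq1
  have hc2sq : (1 - Real.cos a14 ^ 2) * (1 - Real.cos a34 ^ 2) * Real.cos β₂ ^ 2
      = (Real.cos a13 + Real.cos a14 * Real.cos a34) ^ 2 := by
    rw [← e14, ← e34]
    linear_combination (Real.cos β₂ * (Real.sin a14 * Real.sin a34) +
      (Real.cos a13 + Real.cos a14 * Real.cos a34)) * hq2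
  have hc3sq : (1 - Real.cos a14 ^ 2) * (1 - Real.cos a24 ^ 2) * Real.cos β₃ ^ 2
      = (Real.cos a12 + Real.cos a14 * Real.cos a24) ^ 2 := by
    rw [← e14, ← e24]
    linear_combination (Real.cos β₃ * (Real.sin a14 * Real.sin a24) +
      (Real.cos a12 + Real.cos a14 * Real.cos a24)) * hq3
  have hc123 : (1 - Real.cos a14 ^ 2) * (1 - Real.cos a24 ^ 2) * (1 - Real.cos a34 ^ 2) *
      (Real.cos β₁ * Real.cos β₂ * Real.cos β₃)
      = (Real.cos a23 + Real.cos a24 * Real.cos a34) *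
        (Real.cos a13 + Real.cos a14 * Real.cos a34) *
        (Real.cos a12 + Real.cos a14 * Real.cos a24) := by
    rw [← e14, ← e24, ← e34]
    linear_combination (Real.cos β₂ * (Real.sin a14 * Real.sin a34) *
        (Real.cos β₃ * (Real.sin a14 * Real.sin a24))) * hq1 +
      ((Real.cos a23 + Real.cos a24 * Real.cos a34) *
        (Real.cos β₃ * (Real.sin a14 * Real.sin a24))) * hq2 +
      ((Real.cos a23 + Real.cos a24 * Real.cos a34) *
        (Real.cos a13 + Real.cos a14 * Real.cos a34)) * hq3
  have hdet : (!![1, -Real.cos a12, -Real.cos a13, -Real.cos a14;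
        -Real.cos a12, 1, -Real.cos a23, -Real.cos a24;
        -Real.cos a13, -Real.cos a23, 1, -Real.cos a34;
        -Real.cos a14, -Real.cos a24, -Real.cos a34, 1] :
      Matrix (Fin 4) (Fin 4) ℝ).det =
      -((1 - Real.cos a14 ^ 2) * (Real.cos a23 + Real.cos a24 * Real.cos a34) ^ 2 +
        (1 - Real.cos a24 ^ 2) * (Real.cos a13 + Real.cos a14 * Real.cos a34) ^ 2 +
        (1 - Real.cos a34 ^ 2) * (Real.cos a12 + Real.cos a14 * Real.cos a24) ^ 2 -
        (1 - Real.cos a14 ^ 2) * (1 - Real.cos a24 ^ 2) * (1 - Real.cos a34 ^ 2) +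
        2 * ((Real.cos a23 + Real.cos a24 * Real.cos a34) *
          (Real.cos a13 + Real.cos a14 * Real.cos a34) *
          (Real.cos a12 + Real.cos a14 * Real.cos a24))) := by
    rw [Matrix.det_succ_row_zero]
    simp [Fin.sum_univ_succ, Matrix.det_fin_three, Fin.succAbove]
    ring
  rw [hdet]
  linear_combination (4 * (1 - Real.cos a14 ^ 2) * (1 - Real.cos a24 ^ 2) *
      (1 - Real.cos a34 ^ 2)) * prod4 +
    (1 - Real.cos a14 ^ 2) * hc1sq + (1 - Real.cos a24 ^ 2) * hc2sq +
    (1 - Real.cos a34 ^ 2) * hc3sq + 2 * hc123
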